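/- Let f : {−1,1}^N → {−1,1} be a Boolean function and let (𝒩, B) be a no-signaling channel from n bits to N bits. Then there exists a finitely supported probability distribution Γ over decision trees on the n input variables such that: (i) for every x ∈ {−1,1}^n and every b ∈ {−1,1}, Pr_{y∼𝒩(x)}[f(y) = b] = Pr_{τ∼Γ}[τ(x) = b]; and (ii) every decision tree τ in the support of Γ has depth(τ) ≤ DT_depth(f). -/

import Mathlib

open scoped Classical ENNReal

noncomputable section

/-- A `±1` bit, encoded as a unit of `ℤ`. -/
abbrev Bit := ℤˣ

/-- A channel from `ι`-indexed bit strings to `κ`-indexed bit strings. -/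
abbrev Channel (ι κ : Type) : Type := (ι → Bit) → PMF (κ → Bit)

/-- Marginal of a distribution on the cube on the coordinates in `T`. -/
def marg {κ : Type} (p : PMF (κ → Bit)) (T : Finset κ) : PMF ({i // i ∈ T} → Bit) :=
  p.map fun y i => y i.1

/-- The preimage `B⁻¹(S ∪ {⊥})`. -/
def preim {ι κ : Type} [Fintype κ] (B : κ → Option ι) (S : Finset ι) : Finset κ :=
  Finset.univ.filter fun ℓ => ∀ a, B ℓ = some a → a ∈ S

/-- `(𝒩, B)` is a no-signaling channel: for every `S` and inputs agreeing on `S`, the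
marginals of the outputs on `B⁻¹(S ∪ {⊥})` agree. -/
def NoSignaling {ι κ : Type} [Fintype κ] (𝒩 : Channel ι κ) (B : κ → Option ι) : Prop :=
  ∀ (S : Finset ι) (x x' : ι → Bit), (∀ a ∈ S, x a = x' a) →
    marg (𝒩 x) (preim B S) = marg (𝒩 x') (preim B S)


/-- Decision trees on `n` (±1-valued) variables: a leaf outputs a fixed bit; an internal
node queries variable `i` and branches on whether `x i = 1` or `x i = -1`. -/
inductive DTree (n : ℕ) : Type where
  | leaf : Bit → DTree n
  | node : Fin n → DTree n → DTree n → DTree n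

/-- Evaluation of a decision tree on an input. -/
def DTree.eval {n : ℕ} : DTree n → (Fin n → Bit) → Bit
  | .leaf b, _ => b
  | .node i t e, x => if x i = 1 then t.eval x else e.eval x

/-- Depth of a decision tree. -/
def DTree.depth {n : ℕ} : DTree n → ℕ
  | .leaf _ => 0
  | .node _ t e => max t.depth e.depth + 1

/-- Decision-tree depth of a Boolean function: the least depth of a decision tree
computing it exactly. -/
def DTdepth {N : ℕ} (f : (Fin N → Bit) → Bit) : ℕ :=
  sInf {d | ∃ τ : DTree N, τ.depth ≤ d ∧ ∀ y, τ.eval y = f y}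

end

noncomputable section Aux

/-- Relabeling of tree variables. -/
def DTree.relabel {m k : ℕ} (g : Fin m → Fin k) : DTree m → DTree k
  | .leaf b => .leaf b
  | .node i t e => .node (g i) (t.relabel g) (e.relabel g)

lemma DTree.eval_relabel {m k : ℕ} (g : Fin m → Fin k) (τ : DTree m) (y : Fin k → Bit) :
    (τ.relabel g).eval y = τ.eval (fun i => y (g i)) := by
  induction τ with
  | leaf b => rfl
  | node i t e iht ihe => simp [DTree.relabel, DTree.eval, iht, ihe]

lemma exists_tree : ∀ {N : ℕ} (f : (Fin N → Bit) → Bit), ∃ τ : DTree N, ∀ y, τ.eval y = f y := by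
  intro N
  induction N with
  | zero =>
    intro f
    exact ⟨.leaf (f (fun i => i.elim0)), fun y => by
      simp [DTree.eval]; congr 1; funext i; exact i.elim0⟩
  | succ N ih =>
    intro f
    obtain ⟨τ₁, h₁⟩ := ih (fun z => f (Fin.snoc z 1))
    obtain ⟨τ₂, h₂⟩ := ih (fun z => f (Fin.snoc z (-1)))
    refine ⟨.node (Fin.last N) (τ₁.relabel Fin.castSucc) (τ₂.relabel Fin.castSucc), fun y => ?_⟩
    rcases Int.units_eq_one_or (y (Fin.last N)) with hy | hy <;>
      simp [DTree.eval, hy, DTree.eval_relabel, h₁, h₂] <;>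
      [rw [show (1 : Bit) = y (Fin.last N) from hy.symm];
       rw [show (-1 : Bit) = y (Fin.last N) from hy.symm]] <;>
      rw [show (fun i => y (Fin.castSucc i)) = Fin.init y from rfl, Fin.snoc_init_self]

/-- Weight functions. -/
abbrev W (n N : ℕ) := (Fin n → Bit) → (Fin N → Bit) → ℝ≥0∞

def NSfun {n N : ℕ} (B : Fin N → Option (Fin n)) (μ : W n N) : Prop :=
  ∀ (S : Finset (Fin n)) (x x' : Fin n → Bit), (∀ a ∈ S, x a = x' a) →
    ∀ F : (Fin N → Bit) → ℝ≥0∞,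
      (∀ y y' : Fin N → Bit, (∀ ℓ ∈ preim B S, y ℓ = y' ℓ) → F y = F y') →
      (∑ y, F y * μ x y) = ∑ y, F y * μ x' y

lemma NSfun.mass_const {n N : ℕ} {B : Fin N → Option (Fin n)} {μ : W n N} (h : NSfun B μ)
    (x x' : Fin n → Bit) : ∑ y, μ x y = ∑ y, μ x' y := by
  have := h ∅ x x' (by simp) (fun _ => 1) (fun _ _ _ => rfl)
  simpa using this

lemma marg_sum {N : ℕ} (p : PMF (Fin N → Bit)) (T : Finset (Fin N))
    (F : (Fin N → Bit) → ℝ≥0∞)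
    (hF : ∀ y y', (∀ ℓ ∈ T, y ℓ = y' ℓ) → F y = F y') :
    ∑ y, F y * p y
      = ∑' z : ({i // i ∈ T} → Bit),
          F (fun ℓ => if h : ℓ ∈ T then z ⟨ℓ, h⟩ else 1) * (marg p T) z := by
  set r : (Fin N → Bit) → ({i // i ∈ T} → Bit) := fun y i => y i.1 with hr
  set G : ({i // i ∈ T} → Bit) → ℝ≥0∞ :=
    fun z => F (fun ℓ => if h : ℓ ∈ T then z ⟨ℓ, h⟩ else 1) with hG
  have key : ∀ z, (marg p T) z = ∑' y, if z = r y then p y else 0 := fun z => by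
    rw [marg, PMF.map_apply]; exact tsum_congr fun y => by congr
  calc ∑ y, F y * p y = ∑' y, F y * p y := (tsum_fintype _).symm
    _ = ∑' y, G (r y) * p y := by
        refine tsum_congr fun y => ?_
        congr 1
        refine hF y _ fun ℓ hℓ => ?_
        simp [hG, hr, hℓ]
    _ = ∑' y, ∑' z, if z = r y then G z * p y else 0 := by
        refine tsum_congr fun y => ?_
        rw [show (∑' z, if z = r y then G z * p y else 0)
            = ∑' z, if z = r y then G (r y) * p y else 0 from
          tsum_congr fun z => by split <;> simp_all]
        rw [tsum_ite_eq]
    _ = ∑' z, ∑' y, if z = r y then G z * p y else 0 := ENNReal.tsum_comm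
    _ = ∑' z, G z * (marg p T) z := by
        refine tsum_congr fun z => ?_
        rw [key, ← ENNReal.tsum_mul_left]
        refine tsum_congr fun y => ?_
        split <;> simp

lemma noSignaling_NSfun {n N : ℕ} {𝒩 : Channel (Fin n) (Fin N)} {B : Fin N → Option (Fin n)}
    (h : NoSignaling 𝒩 B) : NSfun B (fun x y => 𝒩 x y) := by
  intro S x x' hxx F hF
  rw [marg_sum (𝒩 x) (preim B S) F hF, marg_sum (𝒩 x') (preim B S) F hF, h S x x' hxx]

end Aux

section Key
variable {n N : ℕ}

lemma mass_le_ne_top {μ ν : W n N} (h : ∀ x y, μ x y ≤ ν x y)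
    (hfin : ∀ x, ∑ y, ν x y ≠ ⊤) : ∀ x, ∑ y, μ x y ≠ ⊤ := fun x =>
  (lt_of_le_of_lt (Finset.sum_le_sum fun y _ => h x y) (hfin x).lt_top).ne

lemma key : ∀ (T : DTree N) (B : Fin N → Option (Fin n)) (μ : W n N),
    NSfun B μ → (∀ x, ∑ y, μ x y ≠ ⊤) →
    ∃ (ι : Type) (inst : Fintype ι) (ts : ι → DTree n) (w : ι → ℝ≥0∞),
      (∀ x, ∑ i ∈ @Finset.univ ι inst, w i = ∑ y, μ x y)
      ∧ (∀ i, (ts i).depth ≤ T.depth)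
      ∧ ∀ (x : Fin n → Bit) (b : Bit),
          (∑ y, if T.eval y = b then μ x y else 0)
            = ∑ i ∈ @Finset.univ ι inst, if (ts i).eval x = b then w i else 0 := by
  intro T
  induction T with
  | leaf c =>
    intro B μ h hfin
    refine ⟨PUnit, inferInstance, fun _ => .leaf c, fun _ => ∑ y, μ (fun _ => 1) y, ?_, ?_, ?_⟩
    · intro x; simpa using h.mass_const (fun _ => 1) x
    · intro i; exact le_refl 0
    · intro x b
      have hm := h.mass_const (fun _ => 1) x
      by_cases hc : c = b <;> simp [DTree.eval, hc, hm]
  | node ℓ t e IHt IHe =>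
    intro B μ h hfin
    -- main: the case where B ℓ = none, giving depth bound max t.depth e.depth
    have main : ∀ (B' : Fin N → Option (Fin n)) (μ : W n N), B' ℓ = none → NSfun B' μ →
        (∀ x, ∑ y, μ x y ≠ ⊤) →
        ∃ (ι : Type) (inst : Fintype ι) (ts : ι → DTree n) (w : ι → ℝ≥0∞),
          (∀ x, ∑ i ∈ @Finset.univ ι inst, w i = ∑ y, μ x y)
          ∧ (∀ i, (ts i).depth ≤ max t.depth e.depth)
          ∧ ∀ (x : Fin n → Bit) (b : Bit),
              (∑ y, if (DTree.node ℓ t e).eval y = b then μ x y else 0)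
                = ∑ i ∈ @Finset.univ ι inst, if (ts i).eval x = b then w i else 0 := by
      intro B' μ hBl' h' hfin'
      have hmem : ∀ S, ℓ ∈ preim B' S := by
        intro S; simp [preim, hBl']
      set μp : W n N := fun x y => if y ℓ = 1 then μ x y else 0 with hμp
      set μm : W n N := fun x y => if y ℓ = 1 then 0 else μ x y with hμm
      have hsplit : ∀ x y, μ x y = μp x y + μm x y := by
        intro x y; by_cases hy : y ℓ = 1 <;> simp [hμp, hμm, hy]
      have nsp : NSfun B' μp := by
        intro S x x' hxx F hF
        have := h' S x x' hxx (fun y => if y ℓ = 1 then F y else 0)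
          (fun y y' hy => by
            simp only [hy ℓ (hmem S), hF y y' hy])
        calc ∑ y, F y * μp x y = ∑ y, (if y ℓ = 1 then F y else 0) * μ x y := by
              refine Finset.sum_congr rfl fun y _ => ?_
              by_cases hy : y ℓ = 1 <;> simp [hμp, hy]
          _ = ∑ y, (if y ℓ = 1 then F y else 0) * μ x' y := this
          _ = ∑ y, F y * μp x' y := by
              refine Finset.sum_congr rfl fun y _ => ?_
              by_cases hy : y ℓ = 1 <;> simp [hμp, hy]
      have nsm : NSfun B' μm := by
        intro S x x' hxx F hF
        have := h' S x x' hxx (fun y => if y ℓ = 1 then 0 else F y)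
          (fun y y' hy => by
            simp only [hy ℓ (hmem S), hF y y' hy])
        calc ∑ y, F y * μm x y = ∑ y, (if y ℓ = 1 then 0 else F y) * μ x y := by
              refine Finset.sum_congr rfl fun y _ => ?_
              by_cases hy : y ℓ = 1 <;> simp [hμm, hy]
          _ = ∑ y, (if y ℓ = 1 then 0 else F y) * μ x' y := this
          _ = ∑ y, F y * μm x' y := by
              refine Finset.sum_congr rfl fun y _ => ?_
              by_cases hy : y ℓ = 1 <;> simp [hμm, hy]
      have finp : ∀ x, ∑ y, μp x y ≠ ⊤ :=
        mass_le_ne_top (fun x y => by by_cases hy : y ℓ = 1 <;> simp [hμp, hy]) hfin'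
      have finm : ∀ x, ∑ y, μm x y ≠ ⊤ :=
        mass_le_ne_top (fun x y => by by_cases hy : y ℓ = 1 <;> simp [hμm, hy]) hfin'
      obtain ⟨ι₁, inst₁, ts₁, w₁, hm₁, hd₁, he₁⟩ := IHt B' μp nsp finp
      obtain ⟨ι₂, inst₂, ts₂, w₂, hm₂, hd₂, he₂⟩ := IHe B' μm nsm finm
      refine ⟨ι₁ ⊕ ι₂, inferInstance, Sum.elim ts₁ ts₂, Sum.elim w₁ w₂, ?_, ?_, ?_⟩
      · intro x
        rw [Fintype.sum_sum_type]
        simp only [Sum.elim_inl, Sum.elim_inr]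
        rw [hm₁ x, hm₂ x, ← Finset.sum_add_distrib]
        exact Finset.sum_congr rfl fun y _ => (hsplit x y).symm
      · rintro (i | j)
        · exact le_trans (hd₁ i) (le_max_left _ _)
        · exact le_trans (hd₂ j) (le_max_right _ _)
      · intro x b
        have pointwise : ∀ y, (if (DTree.node ℓ t e).eval y = b then μ x y else 0)
            = (if t.eval y = b then μp x y else 0) + (if e.eval y = b then μm x y else 0) := by
          intro y
          by_cases hy : y ℓ = 1 <;>
            simp [DTree.eval, hy, hμp, hμm] <;> split <;> simp
        calc (∑ y, if (DTree.node ℓ t e).eval y = b then μ x y else 0)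
            = ∑ y, ((if t.eval y = b then μp x y else 0)
                + (if e.eval y = b then μm x y else 0)) :=
              Finset.sum_congr rfl fun y _ => pointwise y
          _ = (∑ y, if t.eval y = b then μp x y else 0)
                + ∑ y, if e.eval y = b then μm x y else 0 := Finset.sum_add_distrib
          _ = _ := by
              rw [he₁ x b, he₂ x b, Fintype.sum_sum_type]
              simp
              congr!

    rcases hBl : B ℓ with _ | a
    · obtain ⟨ι, inst, ts, w, hm, hd, he⟩ := main B μ hBl h hfin
      exact ⟨ι, inst, ts, w, hm,
        fun i => le_trans (hd i) (Nat.le_succ _), he⟩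
    ·
      -- B ℓ = some a : fix the value of x a, use `main` with a modified B
      set B' : Fin N → Option (Fin n) := fun ℓ' => if B ℓ' = some a then none else B ℓ' with hB'
      have hB'ℓ : B' ℓ = none := by simp [hB', hBl]
      have hpreim : ∀ S, preim B' S = preim B (insert a S) := by
        intro S
        ext ℓ'
        simp only [preim, Finset.mem_filter, Finset.mem_univ, true_and]
        by_cases hc : B ℓ' = some a
        · simp [hB', hc]
        · simp only [hB', if_neg hc]
          constructor
          · intro hh c hbc
            exact Finset.mem_insert_of_mem (hh c hbc)
          · intro hh c hbc
            rcases Finset.mem_insert.mp (hh c hbc) with rfl | hcs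
            · exact absurd hbc hc
            · exact hcs
      set ν : Bit → W n N := fun v x y => μ (Function.update x a v) y with hν
      have nsν : ∀ v, NSfun B' (ν v) := by
        intro v S x x' hxx F hF
        refine h (insert a S) (Function.update x a v) (Function.update x' a v) ?_ F ?_
        · intro c hc
          by_cases hca : c = a
          · subst hca; simp
          · rw [Function.update_of_ne hca, Function.update_of_ne hca]
            exact hxx c ((Finset.mem_insert.mp hc).resolve_left hca)
        · intro y y' hy
          exact hF y y' (by rw [hpreim S]; exact hy)
      have finν : ∀ v x, ∑ y, ν v x y ≠ ⊤ := fun v x => hfin (Function.update x a v)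
      set m : ℝ≥0∞ := ∑ y, μ (fun _ => 1) y with hmdef
      have hmass : ∀ x, ∑ y, μ x y = m := fun x => h.mass_const x (fun _ => 1)
      have hνmass : ∀ v x, ∑ y, ν v x y = m := fun v x => hmass (Function.update x a v)
      by_cases hm0 : m = 0
      · -- degenerate case: everything is zero
        refine ⟨PEmpty, inferInstance, fun i => i.elim, fun i => i.elim, ?_, ?_, ?_⟩
        · intro x; rw [hmass x, hm0]; simp
        · rintro ⟨⟩
        · intro x b
          have hle : (∑ y, if (DTree.node ℓ t e).eval y = b then μ x y else 0) ≤ 0 := by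
            calc (∑ y, if (DTree.node ℓ t e).eval y = b then μ x y else 0)
                ≤ ∑ y, μ x y := Finset.sum_le_sum fun y _ => by split <;> simp
              _ = 0 := by rw [hmass x, hm0]
          rw [le_antisymm hle zero_le]
          simp
      · have hmtop : m ≠ ⊤ := hfin _
        obtain ⟨ι₁, inst₁, ts₁, w₁, hm₁, hd₁, he₁⟩ := main B' (ν 1) hB'ℓ (nsν 1) (finν 1)
        obtain ⟨ι₂, inst₂, ts₂, w₂, hm₂, hd₂, he₂⟩ := main B' (ν (-1)) hB'ℓ (nsν (-1)) (finν (-1))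
        have hw1 : ∀ x : Fin n → Bit, ∑ i, w₁ i = m := fun x => (hm₁ x).trans (hνmass 1 x)
        have hw2 : ∀ x : Fin n → Bit, ∑ j, w₂ j = m := fun x => (hm₂ x).trans (hνmass (-1) x)
        have hinner₁ : ∀ i, (∑ j, w₁ i * w₂ j * m⁻¹) = w₁ i := by
          intro i
          calc (∑ j, w₁ i * w₂ j * m⁻¹) = ∑ j, (w₁ i * m⁻¹) * w₂ j :=
                Finset.sum_congr rfl fun j _ => by ring
            _ = (w₁ i * m⁻¹) * ∑ j, w₂ j := (Finset.mul_sum _ _ _).symm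
            _ = w₁ i * (m⁻¹ * m) := by rw [hw2 (fun _ => 1)]; ring
            _ = w₁ i := by rw [ENNReal.inv_mul_cancel hm0 hmtop, mul_one]
        have hinner₂ : ∀ j, (∑ i, w₁ i * w₂ j * m⁻¹) = w₂ j := by
          intro j
          calc (∑ i, w₁ i * w₂ j * m⁻¹) = ∑ i, (w₂ j * m⁻¹) * w₁ i :=
                Finset.sum_congr rfl fun i _ => by ring
            _ = (w₂ j * m⁻¹) * ∑ i, w₁ i := (Finset.mul_sum _ _ _).symm
            _ = w₂ j * (m⁻¹ * m) := by rw [hw1 (fun _ => 1)]; ring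
            _ = w₂ j := by rw [ENNReal.inv_mul_cancel hm0 hmtop, mul_one]
        refine ⟨ι₁ × ι₂, inferInstance,
          (fun p => DTree.node a (ts₁ p.1) (ts₂ p.2)),
          (fun p => w₁ p.1 * w₂ p.2 * m⁻¹), ?_, ?_, ?_⟩
        · intro x
          rw [hmass x, Fintype.sum_prod_type]
          calc (∑ i, ∑ j, w₁ i * w₂ j * m⁻¹) = ∑ i, w₁ i :=
                Finset.sum_congr rfl fun i _ => hinner₁ i
            _ = m := hw1 (fun _ => 1)
        · rintro ⟨i, j⟩
          simp only [DTree.depth]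
          exact Nat.succ_le_succ (max_le (hd₁ i) (hd₂ j))
        · intro x b
          rw [Fintype.sum_prod_type]
          rcases Int.units_eq_one_or (x a) with hxa | hxa
          · have hx1 : Function.update x a 1 = x := by
              rw [← hxa]; exact Function.update_eq_self a x
            have hμν : ∀ y, μ x y = ν 1 x y := fun y => by
              show μ x y = μ (Function.update x a 1) y
              rw [hx1]
            calc (∑ y, if (DTree.node ℓ t e).eval y = b then μ x y else 0)
                = ∑ y, if (DTree.node ℓ t e).eval y = b then ν 1 x y else 0 := by
                  refine Finset.sum_congr rfl fun y _ => ?_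
                  rw [hμν y]
              _ = ∑ i, if (ts₁ i).eval x = b then w₁ i else 0 := he₁ x b
              _ = ∑ i, ∑ j, if (DTree.node a (ts₁ i) (ts₂ j)).eval x = b
                    then w₁ i * w₂ j * m⁻¹ else 0 := by
                  refine Finset.sum_congr rfl fun i _ => ?_
                  simp only [DTree.eval, hxa, if_pos]
                  by_cases hc : (ts₁ i).eval x = b
                  · rw [if_pos hc, show (∑ j, if (ts₁ i).eval x = b
                        then w₁ i * w₂ j * m⁻¹ else 0) = ∑ j, w₁ i * w₂ j * m⁻¹ from
                      Finset.sum_congr rfl fun j _ => if_pos hc]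
                    exact (hinner₁ i).symm
                  · simp [hc]
          · have hxne : x a ≠ 1 := by
              rw [hxa]; decide
            have hx1 : Function.update x a (-1) = x := by
              rw [← hxa]; exact Function.update_eq_self a x
            have hμν : ∀ y, μ x y = ν (-1) x y := fun y => by
              show μ x y = μ (Function.update x a (-1)) y
              rw [hx1]
            calc (∑ y, if (DTree.node ℓ t e).eval y = b then μ x y else 0)
                = ∑ y, if (DTree.node ℓ t e).eval y = b then ν (-1) x y else 0 := by
                  refine Finset.sum_congr rfl fun y _ => ?_
                  rw [hμν y]
              _ = ∑ j, if (ts₂ j).eval x = b then w₂ j else 0 := he₂ x b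
              _ = ∑ j, ∑ i, if (ts₂ j).eval x = b then w₁ i * w₂ j * m⁻¹ else 0 := by
                  refine Finset.sum_congr rfl fun j _ => ?_
                  by_cases hc : (ts₂ j).eval x = b
                  · rw [if_pos hc, show (∑ i, if (ts₂ j).eval x = b
                        then w₁ i * w₂ j * m⁻¹ else 0) = ∑ i, w₁ i * w₂ j * m⁻¹ from
                      Finset.sum_congr rfl fun i _ => if_pos hc]
                    exact (hinner₂ j).symm
                  · simp [hc]
              _ = ∑ i, ∑ j, if (DTree.node a (ts₁ i) (ts₂ j)).eval x = b
                    then w₁ i * w₂ j * m⁻¹ else 0 := by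
                  rw [Finset.sum_comm]
                  refine Finset.sum_congr rfl fun j _ => Finset.sum_congr rfl fun i _ => ?_
                  simp [DTree.eval, hxne]

end Key

/-- (Theorem 4, decision tree decomposition.)  For any Boolean `f` and no-signaling
channel `(𝒩, B)` from `n` bits to `N` bits, the randomized function `f ∘ 𝒩` is equal to
a finitely supported distribution `Γ` over decision trees on the `n` input variables —
`Pr_{y∼𝒩(x)}[f(y) = b] = Pr_{τ∼Γ}[τ(x) = b]` for all `x, b` — all of whose trees have
depth at most `DT_depth(f)`. -/
theorem nsc_tree_decomposition {n N : ℕ} (f : (Fin N → Bit) → Bit)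
    (𝒩 : Channel (Fin n) (Fin N)) (B : Fin N → Option (Fin n))
    (hNS : NoSignaling 𝒩 B) :
    ∃ (k : ℕ) (ts : Fin k → DTree n) (w : Fin k → ℝ≥0∞),
      (∑ i, w i) = 1
      ∧ (∀ i, (ts i).depth ≤ DTdepth f)
      ∧ ∀ (x : Fin n → Bit) (b : Bit),
          (∑ y : Fin N → Bit, if f y = b then 𝒩 x y else 0)
            = ∑ i, if (ts i).eval x = b then w i else 0 := by
  -- an optimal tree computing f
  have hne : {d | ∃ τ : DTree N, τ.depth ≤ d ∧ ∀ y, τ.eval y = f y}.Nonempty := by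
    obtain ⟨τ, hτ⟩ := exists_tree f
    exact ⟨τ.depth, τ, le_refl _, hτ⟩
  obtain ⟨τ, hτd, hτf⟩ : ∃ τ : DTree N, τ.depth ≤ DTdepth f ∧ ∀ y, τ.eval y = f y :=
    Nat.sInf_mem hne
  -- PMF mass facts
  have hPMF : ∀ x : Fin n → Bit, (∑ y, (𝒩 x) y) = 1 := by
    intro x
    have := (𝒩 x).tsum_coe
    rwa [tsum_fintype] at this
  obtain ⟨ι, inst, ts, w, hm, hd, he⟩ :=
    key τ B (fun x y => 𝒩 x y) (noSignaling_NSfun hNS)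
      (fun x => by rw [hPMF x]; exact ENNReal.one_ne_top)
  set E : ι ≃ Fin (Fintype.card ι) := Fintype.equivFin ι with hE
  refine ⟨Fintype.card ι, fun i => ts (E.symm i), fun i => w (E.symm i), ?_, ?_, ?_⟩
  · rw [Equiv.sum_comp E.symm w]
    rw [hm (fun _ => 1), hPMF]
  · intro i
    exact le_trans (hd (E.symm i)) (le_trans (le_refl _) hτd)
  · intro x b
    calc (∑ y : Fin N → Bit, if f y = b then 𝒩 x y else 0)
        = ∑ y : Fin N → Bit, if τ.eval y = b then 𝒩 x y else 0 := by
          refine Finset.sum_congr rfl fun y _ => ?_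
          rw [hτf y]
      _ = ∑ i, if (ts i).eval x = b then w i else 0 := he x b
      _ = _ := (Equiv.sum_comp E.symm fun i => if (ts i).eval x = b then w i else 0).symm
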